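/- A total preorder ≼ on a set X is representable by a real-valued utility function (there exists u : X → ℝ with x ≼ y ⟺ u(x) ≤ u(y) for all x, y ∈ X) if and only if ≼ is perfectly separable. -/

import Mathlib

open Classical in
/-- A total preorder is representable by a real-valued utility
function iff it is perfectly separable. -/
theorem representable_iff_perfectly_separable
    {X : Type*} (r : X → X → Prop)
    (hrefl : ∀ x, r x x) (htrans : ∀ x y z, r x y → r y z → r x z)
    (htotal : ∀ x y, r x y ∨ r y x) :
    (∃ u : X → ℝ, ∀ x y, r x y ↔ u x ≤ u y) ↔
      (∃ D : Set X, D.Countable ∧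
        ∀ x y, (r x y ∧ ¬ r y x) → ∃ d ∈ D, r x d ∧ r d y) := by
  constructor
  · rintro ⟨u, hu⟩
    -- Jump values: image points with an empty gap above them
    set V : Set ℝ := {t | (∃ x, u x = t) ∧
        ∃ s, (∃ y, u y = s) ∧ t < s ∧ ∀ z, ¬ (t < u z ∧ u z < s)} with hV
    have key : ∀ t ∈ V, ∃ q : ℚ, t < (q : ℝ) ∧ ∀ z, t < u z → (q : ℝ) < u z := by
      rintro t ⟨-, s, -, hts, hgap⟩
      obtain ⟨q, hq1, hq2⟩ := exists_rat_btwn hts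
      refine ⟨q, hq1, fun z hz => ?_⟩
      have := hgap z
      push_neg at this
      exact lt_of_lt_of_le hq2 (this hz)
    have hVc : V.Countable := by
      rw [← Set.countable_coe_iff]
      refine ⟨⟨fun t => Encodable.encode (choose (key t t.2)), ?_⟩⟩
      intro a b hab
      have hab' : choose (key a a.2) = choose (key b b.2) :=
        Encodable.encode_injective hab
      obtain ⟨ha1, ha2⟩ := choose_spec (key a a.2)
      obtain ⟨hb1, hb2⟩ := choose_spec (key b b.2)
      rcases lt_trichotomy (a : ℝ) (b : ℝ) with h | h | h
      · obtain ⟨xb, hxb⟩ := b.2.1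
        have := ha2 xb (by rw [hxb]; exact h)
        rw [hxb, hab'] at this
        exact absurd (this.trans hb1) (lt_irrefl _)
      · exact Subtype.ext h
      · obtain ⟨xa, hxa⟩ := a.2.1
        have := hb2 xa (by rw [hxa]; exact h)
        rw [hxa, ← hab'] at this
        exact absurd (this.trans ha1) (lt_irrefl _)
    -- D₁ : one representative per jump value
    have : Countable ↥V := hVc.to_subtype
    set D₁ : Set X := Set.range (fun t : ↥V => choose t.2.1) with hD₁
    -- D₂ : one representative between each feasible rational pair
    set D₂ : Set X := Set.range
        (fun pq : {pq : ℚ × ℚ // ∃ z, (pq.1 : ℝ) < u z ∧ u z < (pq.2 : ℝ)} =>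
          choose pq.2) with hD₂
    refine ⟨D₁ ∪ D₂, (Set.countable_range _).union (Set.countable_range _), ?_⟩
    rintro x y ⟨hxy, hyx⟩
    have hxy' : u x < u y := lt_of_le_not_ge ((hu x y).1 hxy) (fun h => hyx ((hu y x).2 h))
    by_cases h : ∃ z, u x < u z ∧ u z < u y
    · obtain ⟨z, hz1, hz2⟩ := h
      obtain ⟨p, hp1, hp2⟩ := exists_rat_btwn hz1
      obtain ⟨q, hq1, hq2⟩ := exists_rat_btwn hz2
      have hpq : ∃ w, ((p, q).1 : ℝ) < u w ∧ u w < ((p, q).2 : ℝ) := ⟨z, hp2, hq1⟩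
      set d := choose hpq with hd
      obtain ⟨hd1, hd2⟩ := choose_spec hpq
      refine ⟨d, Or.inr ⟨⟨(p, q), hpq⟩, rfl⟩, (hu x d).2 (le_of_lt (hp1.trans hd1)),
        (hu d y).2 (le_of_lt (hd2.trans hq2))⟩
    · push_neg at h
      have hmem : u x ∈ V := ⟨⟨x, rfl⟩, u y, ⟨y, rfl⟩, hxy', fun z hz => (not_le.2 hz.2) (h z hz.1)⟩
      set t : ↥V := ⟨u x, hmem⟩ with ht
      set d := choose t.2.1 with hd
      have hd1 : u d = u x := choose_spec t.2.1
      refine ⟨d, Or.inl ⟨t, rfl⟩, (hu x d).2 (le_of_eq hd1.symm),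
        (hu d y).2 (by rw [hd1]; exact le_of_lt hxy')⟩
  · rintro ⟨D, hDc, hD⟩
    rcases D.eq_empty_or_nonempty with hDe | hDe
    · -- then r holds everywhere
      refine ⟨fun _ => 0, fun x y => ?_⟩
      have hall : ∀ a b, r a b := by
        intro a b
        by_contra hab
        have hba : r b a := (htotal a b).resolve_left hab
        obtain ⟨e, heD, -⟩ := hD b a ⟨hba, hab⟩
        rw [hDe] at heD
        exact heD
      simp [hall x y]
    · obtain ⟨d, hd⟩ := hDc.exists_eq_range hDe
      set f : X → ℕ → ℝ := fun x n =>
        (1 / 2 : ℝ) ^ n * ((if r (d n) x then (1 : ℝ) else 0) - (if r x (d n) then 1 else 0))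
        with hf
      have hb : ∀ x n, ‖f x n‖ ≤ (1 / 2 : ℝ) ^ n := by
        intro x n
        rw [hf]
        simp only [norm_mul, norm_pow, Real.norm_eq_abs]
        rw [abs_of_nonneg (by norm_num : (0:ℝ) ≤ (1/2:ℝ))]
        have : |(if r (d n) x then (1 : ℝ) else 0) - (if r x (d n) then 1 else 0)| ≤ 1 := by
          split_ifs <;> norm_num
        calc (1/2:ℝ)^n * |(if r (d n) x then (1 : ℝ) else 0) - (if r x (d n) then 1 else 0)|
            ≤ (1/2:ℝ)^n * 1 := by
              exact mul_le_mul_of_nonneg_left this (by positivity)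
          _ = (1/2:ℝ)^n := mul_one _
      have hsumm : ∀ x, Summable (f x) := fun x =>
        Summable.of_norm_bounded summable_geometric_two (hb x)
      have hmono : ∀ x y, r x y → ∀ n, f x n ≤ f y n := by
        intro x y hxy n
        simp only [hf]
        have h1 : (if r (d n) x then (1:ℝ) else 0) ≤ (if r (d n) y then 1 else 0) := by
          split_ifs with h h'
          · exact le_refl _
          · exact absurd (htrans _ _ _ h hxy) h'
          · norm_num
          · exact le_refl _
        have h2 : (if r y (d n) then (1:ℝ) else 0) ≤ (if r x (d n) then 1 else 0) := by
          split_ifs with h h'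
          · exact le_refl _
          · exact absurd (htrans _ _ _ hxy h) h'
          · norm_num
          · exact le_refl _
        have : ((if r (d n) x then (1:ℝ) else 0) - (if r x (d n) then 1 else 0))
            ≤ ((if r (d n) y then (1:ℝ) else 0) - (if r y (d n) then 1 else 0)) := by
          linarith
        exact mul_le_mul_of_nonneg_left this (by positivity)
      refine ⟨fun x => ∑' n, f x n, fun x y => ?_⟩
      constructor
      · intro hxy
        exact Summable.tsum_le_tsum (hmono x y hxy) (hsumm x) (hsumm y)
      · intro hle
        by_contra hxy
        have hyx : r y x := (htotal x y).resolve_left hxy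
        obtain ⟨e, heD, hye, hex⟩ := hD y x ⟨hyx, hxy⟩
        rw [hd] at heD
        obtain ⟨n, hn⟩ := heD
        have hstrict : f y n < f x n := by
          rw [hf]
          have hA : (if r (d n) x then (1:ℝ) else 0) = 1 := by rw [hn] at *; simp [hex]
          have hnot : ¬ (r x (d n) ∧ r (d n) y) := by
            rintro ⟨h1, h2⟩
            exact hxy (htrans _ _ _ h1 h2)
          have : ((if r (d n) y then (1:ℝ) else 0) - (if r y (d n) then 1 else 0))
              < ((if r (d n) x then (1:ℝ) else 0) - (if r x (d n) then 1 else 0)) := by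
            have hB : (if r y (d n) then (1:ℝ) else 0) = 1 := by rw [hn] at *; simp [hye]
            rw [hA, hB]
            by_cases h1 : r x (d n)
            · have h2 : ¬ r (d n) y := fun h => hnot ⟨h1, h⟩
              simp [h1, h2]
            · simp only [h1, if_false, sub_zero]
              split_ifs <;> norm_num
          exact mul_lt_mul_of_pos_left this (by positivity)
        have : (∑' n, f y n) < ∑' n, f x n :=
          Summable.tsum_lt_tsum (hmono y x hyx) hstrict (hsumm y) (hsumm x)
        linarith
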